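/- The function f₁(x) = x/sin(x) on (0, π/2] satisfies the linearized static equation f₁'' + 2·cot(x)·f₁' − f₁ = 0, and satisfies the Robin condition f₁'(π/2) = b·f₁(π/2) exactly when b = 2/π. -/

import Mathlib

open Real

/-- f₁(x) = x/sin x satisfies f₁'' + 2 cot x f₁' - f₁ = 0 on (0, π/2], and
the Robin condition f₁'(π/2) = b f₁(π/2) holds exactly when b = 2/π. -/
theorem stmt_7 (f₁ : ℝ → ℝ) (hf : ∀ x, f₁ x = x / Real.sin x) :
    (∀ x ∈ Set.Ioc 0 (π / 2),
      deriv (deriv f₁) x + 2 * (Real.cos x / Real.sin x) * deriv f₁ x - f₁ x = 0) ∧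
    (∀ b : ℝ, deriv f₁ (π / 2) = b * f₁ (π / 2) ↔ b = 2 / π) := by
  have hfe : f₁ = fun x => x / Real.sin x := funext hf
  have key : ∀ x : ℝ, Real.sin x ≠ 0 →
      HasDerivAt f₁ ((Real.sin x - x * Real.cos x) / (Real.sin x) ^ 2) x := by
    intro x hs
    have h := (hasDerivAt_id x).div (Real.hasDerivAt_sin x) hs
    rw [hfe]
    refine h.congr_deriv ?_
    simp [id]
  have hd : ∀ x : ℝ, Real.sin x ≠ 0 →
      deriv f₁ x = (Real.sin x - x * Real.cos x) / (Real.sin x) ^ 2 := fun x hs =>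
    (key x hs).deriv
  have hpi2 : Real.sin (π / 2) = 1 := Real.sin_pi_div_two
  constructor
  · intro x hx
    have hs : Real.sin x ≠ 0 := by
      have : 0 < Real.sin x := Real.sin_pos_of_pos_of_lt_pi hx.1
        (lt_of_le_of_lt hx.2 (by linarith [Real.pi_pos]))
      exact ne_of_gt this
    -- second derivative
    have hev : deriv f₁ =ᶠ[nhds x]
        fun y => (Real.sin y - y * Real.cos y) / (Real.sin y) ^ 2 := by
      have hcont : ContinuousAt Real.sin x := Real.continuous_sin.continuousAt
      have : ∀ᶠ y in nhds x, Real.sin y ≠ 0 :=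
        hcont.eventually_ne hs
      filter_upwards [this] with y hy using hd y hy
    have hg : HasDerivAt (fun y => (Real.sin y - y * Real.cos y) / (Real.sin y) ^ 2)
        ((x * Real.sin x * (Real.sin x) ^ 2 -
          (Real.sin x - x * Real.cos x) * (2 * Real.sin x * Real.cos x)) /
          ((Real.sin x) ^ 2) ^ 2) x := by
      have hnum : HasDerivAt (fun y => Real.sin y - y * Real.cos y)
          (x * Real.sin x) x := by
        have h1 := Real.hasDerivAt_sin x
        have h2 := (hasDerivAt_id x).mul (Real.hasDerivAt_cos x)
        have := h1.sub h2
        refine this.congr_deriv ?_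
        simp [id]
      have hden : HasDerivAt (fun y => (Real.sin y) ^ 2)
          (2 * Real.sin x * Real.cos x) x := by
        have := (Real.hasDerivAt_sin x).pow 2
        refine this.congr_deriv ?_
        ring
      exact hnum.div hden (pow_ne_zero 2 hs)
    have hdd : deriv (deriv f₁) x =
        (x * Real.sin x * (Real.sin x) ^ 2 -
          (Real.sin x - x * Real.cos x) * (2 * Real.sin x * Real.cos x)) /
          ((Real.sin x) ^ 2) ^ 2 := by
      rw [Filter.EventuallyEq.deriv_eq hev]
      exact hg.deriv
    rw [hdd, hd x hs, hf x]
    field_simp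
    ring
  · intro b
    have h1 : deriv f₁ (π / 2) = 1 := by
      rw [hd (π / 2) (by rw [hpi2]; norm_num), hpi2, Real.cos_pi_div_two]
      norm_num
    have h2 : f₁ (π / 2) = π / 2 := by rw [hf, hpi2]; simp
    rw [h1, h2]
    have hπ : π ≠ 0 := ne_of_gt Real.pi_pos
    constructor
    · intro h; field_simp at h ⊢; linarith
    · intro h; rw [h]; field_simp
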